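/- For λ ∈ (0,1), ∫_λ^1 dx/√(2(1-x)(x² - λ²)) = √(2/(1+λ)) · K((1-λ)/(1+λ)), where K is the complete elliptic integral of the first kind (with parameter m = k²). -/

import Mathlib

open Real MeasureTheory Set

/-- Complete elliptic integral of the first kind, parameter m = k². -/
noncomputable def ellK (m : ℝ) : ℝ :=
  ∫ θ in (0:ℝ)..(Real.pi/2), 1 / Real.sqrt (1 - m * Real.sin θ ^ 2)

theorem stmt11 (lam : ℝ) (hlam : lam ∈ Set.Ioo (0:ℝ) 1) :
    (∫ x in lam..1, 1 / Real.sqrt (2 * (1 - x) * (x^2 - lam^2))) =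
    Real.sqrt (2/(1 + lam)) * ellK ((1 - lam)/(1 + lam)) := by
  obtain ⟨h0, h1⟩ := hlam
  have hc : (0:ℝ) < 1 - lam := by linarith
  have hp : (0:ℝ) < 1 + lam := by linarith
  set m : ℝ := (1 - lam) / (1 + lam) with hm
  have hm0 : 0 < m := div_pos hc hp
  have hm1 : m < 1 := by rw [hm, div_lt_one hp]; linarith
  set f : ℝ → ℝ := fun θ => 1 - (1 - lam) * Real.sin θ ^ 2 with hfdef
  set f' : ℝ → ℝ := fun θ => -(1 - lam) * (2 * Real.sin θ * Real.cos θ) with hf'def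
  have hderiv : ∀ θ : ℝ, HasDerivAt f (f' θ) θ := by
    intro θ
    have := ((Real.hasDerivAt_sin θ).pow 2)
    have h2 := (this.const_mul (1 - lam)).const_sub 1
    convert h2 using 1
    show -(1 - lam) * (2 * Real.sin θ * Real.cos θ) = _
    norm_num
    · ring
    all_goals rfl
  have hpi2 : (0:ℝ) < Real.pi / 2 := by positivity
  have hinj : InjOn f (Ioo 0 (Real.pi/2)) := by
    intro a ha b hb hab
    have hsub : ∀ x ∈ Ioo (0:ℝ) (Real.pi/2), x ∈ Icc (-(Real.pi/2)) (Real.pi/2) := fun x hx =>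
      ⟨by linarith [hx.1, hpi2], le_of_lt hx.2⟩
    have hsa : 0 ≤ Real.sin a := Real.sin_nonneg_of_nonneg_of_le_pi ha.1.le
      (by linarith [ha.2, Real.pi_pos])
    have hsb : 0 ≤ Real.sin b := Real.sin_nonneg_of_nonneg_of_le_pi hb.1.le
      (by linarith [hb.2, Real.pi_pos])
    have h2 : Real.sin a ^ 2 = Real.sin b ^ 2 := by
      have : (1 - lam) * Real.sin a ^ 2 = (1 - lam) * Real.sin b ^ 2 := by
        simp only [hfdef] at hab; linarith
      exact mul_left_cancel₀ (ne_of_gt hc) this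
    have hsin : Real.sin a = Real.sin b := by
      nlinarith [sq_nonneg (Real.sin a - Real.sin b), sq_nonneg (Real.sin a + Real.sin b)]
    exact Real.injOn_sin (hsub a ha) (hsub b hb) hsin
  have himg : f '' (Ioo 0 (Real.pi/2)) = Ioo lam 1 := by
    ext x
    constructor
    · rintro ⟨θ, hθ, rfl⟩
      have hs0 : 0 < Real.sin θ := Real.sin_pos_of_pos_of_lt_pi hθ.1
        (by linarith [hθ.2, Real.pi_pos])
      have hc0 : 0 < Real.cos θ := Real.cos_pos_of_mem_Ioo
        ⟨by linarith [hθ.1, hpi2], hθ.2⟩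
      have hpyth := Real.sin_sq_add_cos_sq θ
      have h6 : 0 < (1 - lam) * Real.cos θ ^ 2 := by positivity
      have h7 : 0 < (1 - lam) * Real.sin θ ^ 2 := by positivity
      have h5 : (1 - lam) * Real.sin θ ^ 2 + (1 - lam) * Real.cos θ ^ 2 = 1 - lam := by
        linear_combination (1 - lam) * hpyth
      constructor
      · simp only [hfdef]; linarith
      · simp only [hfdef]; linarith
    · rintro ⟨hx1, hx2⟩
      have ht0 : 0 < (1 - x) / (1 - lam) := div_pos (by linarith) hc
      have ht1 : (1 - x) / (1 - lam) < 1 := by rw [div_lt_one hc]; linarith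
      set t : ℝ := Real.sqrt ((1 - x) / (1 - lam)) with htdef
      have htp : 0 < t := Real.sqrt_pos.mpr ht0
      have htl : t < 1 := by
        have := Real.sqrt_lt_sqrt ht0.le ht1
        simpa using this
      refine ⟨Real.arcsin t, ⟨Real.arcsin_pos.mpr htp,
        Real.arcsin_lt_pi_div_two.mpr htl⟩, ?_⟩
      simp only [hfdef]
      rw [Real.sin_arcsin (by linarith) (by linarith), htdef, Real.sq_sqrt ht0.le]
      field_simp
      ring
  have hmeas : MeasurableSet (Ioo (0:ℝ) (Real.pi/2)) := measurableSet_Ioo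
  have hsubst := integral_image_eq_integral_abs_deriv_smul hmeas
    (fun θ _ => (hderiv θ).hasDerivWithinAt) hinj
    (fun x => 1 / Real.sqrt (2 * (1 - x) * (x^2 - lam^2)))
  rw [himg] at hsubst
  have hLHS : (∫ x in lam..1, 1 / Real.sqrt (2 * (1 - x) * (x^2 - lam^2))) =
      ∫ x in Ioo lam 1, 1 / Real.sqrt (2 * (1 - x) * (x^2 - lam^2)) := by
    rw [intervalIntegral.integral_of_le h1.le,
      MeasureTheory.integral_Ioc_eq_integral_Ioo]
  rw [hLHS, hsubst]
  have hq0 : (0:ℝ) < Real.sqrt (2/(1+lam)) := Real.sqrt_pos.mpr (by positivity)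
  have hq2 : Real.sqrt (2/(1+lam)) ^ 2 = 2/(1+lam) := Real.sq_sqrt (by positivity)
  have hpt : ∀ θ ∈ Ioo (0:ℝ) (Real.pi/2),
      |f' θ| • (1 / Real.sqrt (2 * (1 - f θ) * ((f θ)^2 - lam^2))) =
      Real.sqrt (2/(1 + lam)) * (1 / Real.sqrt (1 - m * Real.sin θ ^ 2)) := by
    intro θ hθ
    have hs0 : 0 < Real.sin θ := Real.sin_pos_of_pos_of_lt_pi hθ.1
      (by linarith [hθ.2, Real.pi_pos])
    have hc0 : 0 < Real.cos θ := Real.cos_pos_of_mem_Ioo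
      ⟨by linarith [hθ.1, hpi2], hθ.2⟩
    have hpyth := Real.sin_sq_add_cos_sq θ
    have hu : 0 < 1 - m * Real.sin θ ^ 2 := by nlinarith [Real.sin_le_one θ]
    have hA' : m * (1 + lam) = 1 - lam := by rw [hm]; field_simp
    have hB' : Real.cos θ ^ 2 = 1 - Real.sin θ ^ 2 := by linarith
    have hxfact : 2 * (1 - f θ) * ((f θ)^2 - lam^2) =
        ((1 - lam) * Real.sin θ * Real.cos θ)^2 *
          (2 * (1 + lam) * (1 - m * Real.sin θ^2)) := by
      simp only [hfdef]
      linear_combination (-2*(1-lam)^2*Real.sin θ^2*(1+lam-(1-lam)*Real.sin θ^2)) * hB'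
        + (2*(1-lam)^2*Real.sin θ^4*Real.cos θ^2) * hA'
    have hsqrt : Real.sqrt (2 * (1 - f θ) * ((f θ)^2 - lam^2)) =
        ((1 - lam) * Real.sin θ * Real.cos θ) *
          Real.sqrt (2 * (1 + lam) * (1 - m * Real.sin θ^2)) := by
      rw [hxfact, Real.sqrt_mul (sq_nonneg _), Real.sqrt_sq (by positivity)]
    have habs : |f' θ| = (1 - lam) * (2 * Real.sin θ * Real.cos θ) := by
      simp only [hf'def]
      rw [abs_of_nonpos (by nlinarith [mul_pos hc (mul_pos hs0 hc0)])]; ring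
    have hA : Real.sqrt (2 * (1 + lam) * (1 - m * Real.sin θ^2)) =
        Real.sqrt (2/(1+lam)) * (1+lam) * Real.sqrt (1 - m * Real.sin θ^2) := by
      have h2 : 2 * (1 + lam) = (Real.sqrt (2/(1+lam)) * (1+lam))^2 := by
        rw [mul_pow, hq2]; field_simp
      rw [h2, Real.sqrt_mul (sq_nonneg _), Real.sqrt_sq (by positivity)]
    have hru : 0 < Real.sqrt (1 - m * Real.sin θ ^ 2) := Real.sqrt_pos.mpr hu
    rw [smul_eq_mul, hsqrt, habs, hA]
    set q := Real.sqrt (2/(1+lam)) with hqdef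
    set r := Real.sqrt (1 - m * Real.sin θ ^ 2) with hrdef
    have hq2' : q ^ 2 * (1 + lam) = 2 := by rw [hq2]; field_simp
    field_simp
    linear_combination (-1) * hq2'
  rw [setIntegral_congr_fun hmeas hpt]
  rw [MeasureTheory.integral_const_mul]
  congr 1
  rw [ellK, intervalIntegral.integral_of_le hpi2.le,
    MeasureTheory.integral_Ioc_eq_integral_Ioo]
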